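/- Let q_l = 1/(1 + e^{2^{l-η}}) for real η and integer l, and let H(p) = -p log₂ p - (1-p) log₂(1-p) be the binary entropy. Then for l > η, H(q_l) < 3 log₂(e) · 2^{η - l}. -/

import Mathlib

noncomputable def binH (p : ℝ) : ℝ :=
  -(p * Real.logb 2 p) - (1 - p) * Real.logb 2 (1 - p)

lemma entropy_bound_aux (x : ℝ) (hx : 1 < x) :
    -((1/(1+Real.exp x)) * Real.log (1/(1+Real.exp x)))
      - (1 - 1/(1+Real.exp x)) * Real.log (1 - 1/(1+Real.exp x)) < 3 / x := by
  have hx0 : 0 < x := by linarith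
  have hE : 0 < Real.exp x := Real.exp_pos x
  set E := Real.exp x with hEdef
  have hd : 0 < 1 + E := by linarith
  have h1q : 1 - 1/(1+E) = E/(1+E) := by field_simp; ring
  have hlogq : Real.log (1/(1+E)) = -Real.log (1+E) := by
    rw [one_div, Real.log_inv]
  have hlog1q : Real.log (E/(1+E)) = x - Real.log (1+E) := by
    rw [Real.log_div (ne_of_gt hE) (ne_of_gt hd), hEdef, Real.log_exp]
  have hlogE : Real.log (1+E) ≤ x + 1/E := by
    have h1 : (1+E) = E * (1 + 1/E) := by field_simp; ring
    rw [h1, Real.log_mul (ne_of_gt hE) (by positivity), hEdef, Real.log_exp]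
    have := Real.log_le_sub_one_of_pos (show (0:ℝ) < 1 + 1/E by positivity)
    linarith
  have hcube : (1 + x/3)^3 ≤ E := by
    have h := Real.add_one_le_exp (x/3)
    have h3 : Real.exp (x/3) ^ 3 = E := by
      rw [← Real.exp_nat_mul]; norm_num; rw [hEdef]; ring_nf
    calc (1+x/3)^3 ≤ Real.exp (x/3)^3 := by
          apply pow_le_pow_left₀ (by linarith) (by linarith)
      _ = E := h3
  have hxE : x * (1+x) < 3 * E := by nlinarith
  rw [h1q, hlogq, hlog1q]
  have key : -((1/(1+E)) * (-Real.log (1+E))) - (E/(1+E)) * (x - Real.log (1+E))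
      = Real.log (1+E) - x * E / (1+E) := by field_simp; ring
  rw [key]
  have hxx : x - x*E/(1+E) = x/(1+E) := by field_simp; ring
  have hstep : Real.log (1+E) - x*E/(1+E) ≤ 1/E + x/(1+E) := by linarith
  have hstep2 : x/(1+E) < x/E := by gcongr; linarith
  have hfinal : (1+x)/E ≤ 3/x := by
    rw [div_le_div_iff₀ hE hx0]; nlinarith
  have hsplit : (1+x)/E = 1/E + x/E := by ring
  linarith

theorem stmt_6 (η : ℝ) (l : ℤ) (hl : (l : ℝ) > η) :
    binH (1 / (1 + Real.exp ((2 : ℝ) ^ ((l : ℝ) - η)))) <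
      3 * Real.logb 2 (Real.exp 1) * (2 : ℝ) ^ (η - (l : ℝ)) := by
  set x := (2:ℝ) ^ ((l : ℝ) - η) with hxdef
  have ht : 0 < (l:ℝ) - η := by linarith
  have hx1 : 1 < x := by
    rw [hxdef]
    exact (Real.one_lt_rpow_iff_of_pos (by norm_num)).mpr (Or.inl ⟨by norm_num, ht⟩)
  have hinv : (2:ℝ) ^ (η - (l:ℝ)) = 1 / x := by
    rw [hxdef, show η - (l:ℝ) = -((l:ℝ) - η) by ring,
      Real.rpow_neg (by norm_num : (0:ℝ) ≤ 2), one_div]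
  have hkey := entropy_bound_aux x hx1
  have hlog2 : 0 < Real.log 2 := Real.log_pos (by norm_num)
  have hRHS : 3 * Real.logb 2 (Real.exp 1) * (2:ℝ)^(η-(l:ℝ)) = (3/x) / Real.log 2 := by
    rw [hinv, Real.logb, Real.log_exp]; ring
  have hLHS : binH (1 / (1 + Real.exp x)) =
      (-((1/(1+Real.exp x)) * Real.log (1/(1+Real.exp x)))
        - (1 - 1/(1+Real.exp x)) * Real.log (1 - 1/(1+Real.exp x))) / Real.log 2 := by
    unfold binH
    rw [Real.logb, Real.logb]
    ring
  rw [hRHS, hLHS]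
  gcongr
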